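/- Let n ≥ 1 and let k_1 < k_2 < … < k_n be strictly increasing integers. Then a triangular array T = (T_{i,j})_{1 ≤ j ≤ i ≤ n} of integers with bottom row (k_1,…,k_n) is a generalized monotone triangle if and only if it is a classical monotone triangle (i.e., T_{i+1,j} ≤ T_{i,j} ≤ T_{i+1,j+1} for 1 ≤ j ≤ i < n and T_{i,j} < T_{i,j+1} for 1 ≤ j < i ≤ n); moreover every such triangle has sign +1. Consequently smt(k) equals the number of classical monotone triangles with bottom row (k_1,…,k_n). -/

import Mathlib

/-- The signed sum `Σ'_{l=a..b} f(l)`: the ordinary sum over `[a,b]` when `a ≤ b`,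
and `-Σ_{l=b+1}^{a-1} f(l)` when `a > b`. -/
noncomputable def ssum (a b : ℤ) (f : ℤ → ℤ) : ℤ :=
  if a ≤ b then ∑ l ∈ Finset.Icc a b, f l else -∑ l ∈ Finset.Icc (b + 1) (a - 1), f l

/-- Iterated signed sum over the box `[a 0, b 0] × ⋯ × [a (m-1), b (m-1)]`,
one signed sum per coordinate. -/
noncomputable def sbox : (m : ℕ) → (Fin m → ℤ) → (Fin m → ℤ) → ((Fin m → ℤ) → ℤ) → ℤ
  | 0, _, _, f => f Fin.elim0
  | m + 1, a, b, f =>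
      ssum (a 0) (b 0) fun l =>
        sbox m (fun i => a i.succ) (fun i => b i.succ) fun t => f (Fin.cons l t)

/-- The signed Gelfand–Tsetlin count: `sgt k = 1` for tuples of length `≤ 1`, and
`sgt (k_1,…,k_n) = Σ'_{l_1=k_1..k_2} ⋯ Σ'_{l_{n-1}=k_{n-1}..k_n} sgt (l_1,…,l_{n-1})`. -/
noncomputable def sgt : (n : ℕ) → (Fin n → ℤ) → ℤ
  | 0, _ => 1
  | 1, _ => 1
  | n + 2, k => sbox (n + 1) (fun i => k i.castSucc) (fun i => k i.succ) (sgt (n + 1))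

/-- A triangular array of integers `(T_{i,j})_{1 ≤ j ≤ i ≤ n}` (0-indexed: row `i` has
`i+1` entries). -/
abbrev TriArray (n : ℕ) := (i : Fin n) → Fin (i.1 + 1) → ℤ

/-- The bottom row of the triangular array `T` is `k`. -/
def BottomRow {n : ℕ} (T : TriArray n) (k : Fin n → ℤ) : Prop :=
  ∀ (i : Fin n) (h : i.1 + 1 = n) (j : Fin (i.1 + 1)), T i j = k (Fin.cast h j)

/-- `T` is a (classical) monotone triangle with bottom row `k`: entries increase weakly
along both diagonals and strictly along rows. -/
def IsMT {n : ℕ} (T : TriArray n) (k : Fin n → ℤ) : Prop :=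
  BottomRow T k ∧
  (∀ (i : Fin n) (h : i.1 + 1 < n) (j : Fin (i.1 + 1)),
    T ⟨i.1 + 1, h⟩ j.castSucc ≤ T i j ∧ T i j ≤ T ⟨i.1 + 1, h⟩ j.succ) ∧
  (∀ (i : Fin n) (j : Fin i.1), T i j.castSucc < T i j.succ)

/-- The sequence `l = (l_1,…,l_m)` interlaces `k = (k_1,…,k_{m+1})`, written `l ≺ k`. -/
def Interlaces {m : ℕ} (l : Fin m → ℤ) (k : Fin (m + 1) → ℤ) : Prop :=
  -- (1) each `l_i` lies in the closed interval between `k_i` and `k_{i+1}`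
  (∀ i : Fin m, min (k i.castSucc) (k i.succ) ≤ l i ∧ l i ≤ max (k i.castSucc) (k i.succ)) ∧
  -- (2) if `k_{i-1} ≤ k_i ≤ k_{i+1}`, then `l_{i-1}` and `l_i` are not both `k_i`
  (∀ (j : Fin m) (h : j.1 + 1 < m),
    k j.castSucc ≤ k j.succ → k j.succ ≤ k ⟨j.1 + 2, Nat.succ_lt_succ h⟩ →
      ¬(l j = k j.succ ∧ l ⟨j.1 + 1, h⟩ = k j.succ)) ∧
  -- (3) if `k_i > l_i = k_{i+1}`, then `i ≤ n-2` and `l_{i+1} = l_i`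
  (∀ i : Fin m, k i.castSucc > l i → l i = k i.succ →
      ∃ h : i.1 + 1 < m, l ⟨i.1 + 1, h⟩ = l i) ∧
  -- (4) if `k_i = l_i > k_{i+1}`, then `i ≥ 2` and `l_{i-1} = l_i`
  (∀ i : Fin m, k i.castSucc = l i → l i > k i.succ →
      0 < i.1 ∧ l ⟨i.1 - 1, Nat.lt_of_le_of_lt (Nat.sub_le _ _) i.isLt⟩ = l i)

/-- `T` is a generalized monotone triangle with bottom row `k`: each row interlaces the
next one, and the bottom row is `k`. -/
def IsGMT {n : ℕ} (T : TriArray n) (k : Fin n → ℤ) : Prop :=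
  BottomRow T k ∧
  ∀ (i : Fin n) (h : i.1 + 1 < n), Interlaces (T i) (T ⟨i.1 + 1, h⟩)

/-- The number of strict descents in the rows of `T`, i.e. the number of pairs `(i,j)`
with `T_{i,j} > T_{i,j+1}`. -/
def rowDescents {n : ℕ} (T : TriArray n) : ℕ :=
  ∑ i : Fin n, (Finset.univ.filter fun j : Fin i.1 => T i j.succ < T i j.castSucc).card

/-- The number of `(i,j)` with `T_{i,j} > T_{i-1,j} = T_{i,j+1} = T_{i-1,j+1} > T_{i,j+2}`. -/
def specialCount {n : ℕ} (T : TriArray n) : ℕ :=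
  ∑ i : Fin n,
    (Finset.univ.filter fun j : Fin (i.1 - 1) =>
      T i ⟨j.1, by have := j.isLt; omega⟩ >
          T ⟨i.1 - 1, Nat.lt_of_le_of_lt (Nat.sub_le _ _) i.isLt⟩ j.castSucc ∧
      T ⟨i.1 - 1, Nat.lt_of_le_of_lt (Nat.sub_le _ _) i.isLt⟩ j.castSucc =
          T i ⟨j.1 + 1, by have := j.isLt; omega⟩ ∧
      T i ⟨j.1 + 1, by have := j.isLt; omega⟩ =
          T ⟨i.1 - 1, Nat.lt_of_le_of_lt (Nat.sub_le _ _) i.isLt⟩ j.succ ∧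
      T ⟨i.1 - 1, Nat.lt_of_le_of_lt (Nat.sub_le _ _) i.isLt⟩ j.succ >
          T i ⟨j.1 + 2, by have := j.isLt; omega⟩).card

/-- The sign of a generalized monotone triangle. -/
def gmtSign {n : ℕ} (T : TriArray n) : ℤ :=
  (-1) ^ (rowDescents T + specialCount T)

/-- The signed enumeration of generalized monotone triangles with bottom row `k`
(a finite sum, since all entries of such a triangle lie between the minimum and the
maximum of `k`). -/
noncomputable def smt {n : ℕ} (k : Fin n → ℤ) : ℤ :=
  ∑ᶠ T ∈ {T : TriArray n | IsGMT T k}, gmtSign T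

/-- For a strictly increasing bottom row, a triangular array is a generalized monotone
triangle iff it is a classical monotone triangle; every such triangle has sign `+1`;
consequently `smt k` equals the number of classical monotone triangles with bottom
row `k`. -/
lemma aux_strictMono_of_adj {m : ℕ} {f : Fin m → ℤ}
    (h : ∀ (i : ℕ) (hi : i + 1 < m), f ⟨i, by omega⟩ < f ⟨i + 1, hi⟩) :
    StrictMono f := by
  have key : ∀ (d a : ℕ) (hd : a + d + 1 < m), f ⟨a, by omega⟩ < f ⟨a + d + 1, hd⟩ := by
    intro d
    induction d with
    | zero => intro a hd; exact h a hd
    | succ d ih =>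
      intro a hd
      exact lt_trans (ih a (by omega)) (h (a + d + 1) (by omega))
  intro a b hab
  have hb := b.isLt
  have hab' : a.1 < b.1 := hab
  have hbe : b = ⟨a.1 + (b.1 - a.1 - 1) + 1, by omega⟩ := Fin.ext (by simp; omega)
  rw [hbe]
  exact key _ _ _

lemma interlaces_of_strictMono {m : ℕ} {l : Fin m → ℤ} {k : Fin (m + 1) → ℤ}
    (hk : StrictMono k) (h : Interlaces l k) :
    (∀ i : Fin m, k i.castSucc ≤ l i ∧ l i ≤ k i.succ) ∧ StrictMono l := by
  obtain ⟨h1, h2, h3, h4⟩ := h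
  have hks : ∀ i : Fin m, k i.castSucc < k i.succ := fun i => hk (Fin.castSucc_lt_succ (i := i))
  have hb : ∀ i : Fin m, k i.castSucc ≤ l i ∧ l i ≤ k i.succ := by
    intro i
    have := h1 i
    rwa [min_eq_left (hks i).le, max_eq_right (hks i).le] at this
  refine ⟨hb, aux_strictMono_of_adj ?_⟩
  intro i hi
  have hi' : i < m := by omega
  have hle1 : l ⟨i, hi'⟩ ≤ k (Fin.succ ⟨i, hi'⟩) := (hb ⟨i, hi'⟩).2
  have hle2 : k (Fin.succ (⟨i, hi'⟩ : Fin m)) ≤ l ⟨i + 1, hi⟩ := (hb ⟨i + 1, hi⟩).1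
  have hne := h2 ⟨i, hi'⟩ hi (hks ⟨i, hi'⟩).le
      ((hk (show Fin.succ (⟨i, hi'⟩ : Fin m) < ⟨i + 2, by omega⟩ from by
        simp [Fin.lt_def])).le)
  rcases lt_or_eq_of_le (le_trans hle1 hle2) with hlt | heq
  · exact hlt
  · exfalso
    exact hne ⟨le_antisymm hle1 (heq ▸ hle2), le_antisymm (heq ▸ hle1) hle2⟩

lemma interlaces_of_bounds {m : ℕ} {l : Fin m → ℤ} {k : Fin (m + 1) → ℤ}
    (hk : StrictMono k) (hl : StrictMono l)
    (hb : ∀ i : Fin m, k i.castSucc ≤ l i ∧ l i ≤ k i.succ) :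
    Interlaces l k := by
  have hks : ∀ i : Fin m, k i.castSucc < k i.succ := fun i => hk (Fin.castSucc_lt_succ (i := i))
  refine ⟨?_, ?_, ?_, ?_⟩
  · intro i
    rw [min_eq_left (hks i).le, max_eq_right (hks i).le]
    exact hb i
  · rintro j h - - ⟨e1, e2⟩
    have hlt : l j < l ⟨j.1 + 1, h⟩ := hl (by simp [Fin.lt_def])
    omega
  · intro i hgt heq
    exact absurd (hb i).1 (by omega)
  · intro i heq hgt
    exact absurd (hb i).2 (by omega)

lemma gmt_row_strictMono {n : ℕ} {T : TriArray (n + 1)} {k : Fin (n + 1) → ℤ}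
    (hk : StrictMono k) (hT : IsGMT T k) : ∀ i : Fin (n + 1), StrictMono (T i) := by
  obtain ⟨hbot, hint⟩ := hT
  intro i
  induction i using Fin.reverseInduction with
  | last =>
    intro a b hab
    rw [hbot (Fin.last n) rfl a, hbot (Fin.last n) rfl b]
    exact hk hab
  | cast i ih =>
    have hint' := hint i.castSucc (Nat.succ_lt_succ i.isLt)
    exact (interlaces_of_strictMono ih hint').2

lemma mt_row_strictMono {n : ℕ} {T : TriArray n} {k : Fin n → ℤ}
    (hT : IsMT T k) (i : Fin n) : StrictMono (T i) :=
  aux_strictMono_of_adj fun a ha => hT.2.2 i ⟨a, by omega⟩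

lemma gmt_iff_mt {n : ℕ} (k : Fin (n + 1) → ℤ) (hk : StrictMono k) (T : TriArray (n + 1)) :
    IsGMT T k ↔ IsMT T k := by
  constructor
  · intro hT
    have hrows := gmt_row_strictMono hk hT
    obtain ⟨hbot, hint⟩ := hT
    refine ⟨hbot, ?_, ?_⟩
    · intro i h j
      exact (interlaces_of_strictMono (hrows ⟨i.1 + 1, h⟩) (hint i h)).1 j
    · intro i j
      exact hrows i (Fin.castSucc_lt_succ (i := j))
  · intro hT
    refine ⟨hT.1, ?_⟩
    intro i h
    exact interlaces_of_bounds (mt_row_strictMono hT ⟨i.1 + 1, h⟩)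
      (mt_row_strictMono hT i) (hT.2.1 i h)

lemma gmt_sign_one {n : ℕ} {k : Fin (n + 1) → ℤ} (hk : StrictMono k) {T : TriArray (n + 1)}
    (hT : IsGMT T k) : gmtSign T = 1 := by
  have hrows := gmt_row_strictMono hk hT
  have h1 : rowDescents T = 0 := by
    unfold rowDescents
    refine Finset.sum_eq_zero fun i _ => ?_
    rw [Finset.card_eq_zero, Finset.filter_eq_empty_iff]
    intro j _
    exact not_lt.2 (hrows i (Fin.castSucc_lt_succ (i := j))).le
  have h2 : specialCount T = 0 := by
    unfold specialCount
    refine Finset.sum_eq_zero fun i _ => ?_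
    rw [Finset.card_eq_zero, Finset.filter_eq_empty_iff]
    rintro j -
    rintro ⟨hgt, heq, -, -⟩
    rw [heq] at hgt
    have hj1 : j.1 < i.1 + 1 := by have := j.isLt; omega
    have hj2 : j.1 + 1 < i.1 + 1 := by have := j.isLt; omega
    have hlt : T i ⟨j.1, hj1⟩ < T i ⟨j.1 + 1, hj2⟩ :=
      hrows i (Fin.mk_lt_mk.mpr (Nat.lt_succ_self _))
    exact absurd hgt (not_lt.2 hlt.le)
  rw [gmtSign, h1, h2]
  norm_num

lemma mt_bounds {n : ℕ} {T : TriArray (n + 1)} {k : Fin (n + 1) → ℤ}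
    (hk : Monotone k) (hT : IsMT T k) :
    ∀ (i : Fin (n + 1)) (j : Fin (i.1 + 1)), k 0 ≤ T i j ∧ T i j ≤ k (Fin.last n) := by
  obtain ⟨hbot, hdiag, -⟩ := hT
  intro i
  induction i using Fin.reverseInduction with
  | last =>
    intro j
    rw [hbot (Fin.last n) rfl j]
    exact ⟨hk (Fin.zero_le _), hk (Fin.le_last _)⟩
  | cast i ih =>
    intro j
    have hd := hdiag i.castSucc (Nat.succ_lt_succ i.isLt) j
    exact ⟨le_trans (ih j.castSucc).1 hd.1, le_trans hd.2 (ih j.succ).2⟩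

theorem gmt_eq_mt_of_strictMono (n : ℕ) (k : Fin (n + 1) → ℤ) (hk : StrictMono k) :
    (∀ T : TriArray (n + 1), IsGMT T k ↔ IsMT T k) ∧
    (∀ T : TriArray (n + 1), IsGMT T k → gmtSign T = 1) ∧
    smt k = (Set.ncard {T : TriArray (n + 1) | IsMT T k} : ℤ) := by
  have hiff : ∀ T : TriArray (n + 1), IsGMT T k ↔ IsMT T k := gmt_iff_mt k hk
  refine ⟨hiff, fun T hT => gmt_sign_one hk hT, ?_⟩
  have hset : {T : TriArray (n + 1) | IsGMT T k} = {T | IsMT T k} := Set.ext hiff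
  have hfin : {T : TriArray (n + 1) | IsMT T k}.Finite := by
    apply Set.Finite.subset (Set.Finite.pi fun i : Fin (n + 1) =>
      Set.Finite.pi fun j : Fin (i.1 + 1) => Set.finite_Icc (k 0) (k (Fin.last n)))
    intro T hT
    simp only [Set.mem_pi, Set.mem_univ, forall_true_left, Set.mem_Icc]
    intro i j
    exact mt_bounds hk.monotone hT i j
  rw [smt, hset]
  have h1 : ∑ᶠ T ∈ {T : TriArray (n + 1) | IsMT T k}, gmtSign T
      = ∑ᶠ T ∈ {T : TriArray (n + 1) | IsMT T k}, (1 : ℤ) :=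
    finsum_mem_congr rfl fun T hT => gmt_sign_one hk ((hiff T).2 hT)
  rw [h1, ← Set.Finite.coe_toFinset hfin, finsum_mem_coe_finset, Finset.sum_const]
  simp [Set.ncard_coe_finset]
  exact (Set.ncard_eq_toFinset_card _ hfin).symm
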